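/- If Z ∈ ℝ^n is nondecreasing, X ∈ ℝ^n, σ is any permutation, and g : ℝ → ℝ is convex, then ∑_{i=1}^n g(X_{α(i)} − Z_i) ≤ ∑_{i=1}^n g(X_{σ(i)} − Z_i), where α is the permutation sorting X into nondecreasing order. -/

import Mathlib

/-- `X` is majorized by `Y`: equal total sums and, for the nondecreasing
rearrangements, the tail sums (sums of largest coordinates) of `X` are
dominated by those of `Y`. -/
def IsMajorizedBy {n : ℕ} (X Y : Fin n → ℝ) : Prop :=
  (∑ i, X i = ∑ i, Y i) ∧
  ∀ k : Fin n, ∑ i ∈ Finset.Ici k, X (Tuple.sort X i) ≤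
    ∑ i ∈ Finset.Ici k, Y (Tuple.sort Y i)

open Finset

-- pair splitting
lemma pair_split {n : ℕ} {M : Type*} [AddCommMonoid M] {i j : Fin n} (hij : i ≠ j)
    (f : Fin n → M) :
    ∑ k, f k = f i + f j + ∑ k ∈ (Finset.univ.erase i).erase j, f k := by
  rw [← Finset.add_sum_erase _ f (Finset.mem_univ i),
    ← Finset.add_sum_erase _ f (Finset.mem_erase.2 ⟨Ne.symm hij, Finset.mem_univ j⟩), add_assoc]

-- convexity: midpoints
lemma convex_pair_le {g : ℝ → ℝ} (hg : ConvexOn ℝ Set.univ g) {a b s t : ℝ}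
    (has : a ≤ s) (hsb : s ≤ b) (hst : s + t = a + b) :
    g s + g t ≤ g a + g b := by
  rcases eq_or_lt_of_le (has.trans hsb) with h | hab
  · have hs : s = a := le_antisymm (h ▸ hsb) has
    have ht : t = b := by linarith
    rw [hs, ht]
  · set lam := (b - s) / (b - a) with hlam
    have hba : (0:ℝ) < b - a := by linarith
    have h1 : 0 ≤ lam := div_nonneg (by linarith) (by linarith)
    have h2 : 0 ≤ 1 - lam := by
      rw [hlam]; rw [sub_nonneg, div_le_one hba]; linarith
    have hsum : lam + (1 - lam) = 1 := by ring
    have hs' : lam • a + (1 - lam) • b = s := by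
      simp only [hlam, smul_eq_mul]; field_simp; ring
    have ht' : (1 - lam) • a + lam • b = t := by
      have : t = a + b - s := by linarith
      rw [this]; simp only [hlam, smul_eq_mul]; field_simp; ring
    have e1 := hg.2 (Set.mem_univ a) (Set.mem_univ b) h1 h2 hsum
    have e2 := hg.2 (Set.mem_univ a) (Set.mem_univ b) h2 h1 (by ring)
    rw [hs'] at e1; rw [ht'] at e2
    simp only [smul_eq_mul] at e1 e2
    linarith

lemma convex_swap {g : ℝ → ℝ} (hg : ConvexOn ℝ Set.univ g) {x y z w : ℝ}
    (hxy : x ≤ y) (hzw : z ≤ w) :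
    g (x - z) + g (y - w) ≤ g (x - w) + g (y - z) :=
  convex_pair_le hg (by linarith) (by linarith) (by ring)


lemma nat_ineq {a b i j : ℕ} (hab : a < b) (hij : i < j) : b*i + a*j < a*i + b*j := by
  zify; nlinarith [hab, hij]

lemma mono_case {n : ℕ} (Z Y : Fin n → ℝ) (hZ : Monotone Z) (hY : Monotone Y)
    (g : ℝ → ℝ) (hg : ConvexOn ℝ Set.univ g) :
    ∀ (k : ℕ) (τ : Equiv.Perm (Fin n)), n^3 ≤ (∑ i, (τ i : ℕ) * (i : ℕ)) + k →
    ∑ i, g (Y i - Z i) ≤ ∑ i, g (Y (τ i) - Z i) := by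
  intro k
  induction k with
  | zero =>
    intro τ hk
    rcases Nat.eq_zero_or_pos n with hn | hn
    · subst hn; simp
    · exfalso
      have hb : ∑ i, (τ i : ℕ) * (i : ℕ) ≤ ∑ _i : Fin n, (n-1)*(n-1) := by
        apply Finset.sum_le_sum
        intro i _
        exact Nat.mul_le_mul (Nat.le_pred_of_lt (τ i).is_lt) (Nat.le_pred_of_lt i.is_lt)
      simp only [Finset.sum_const, Finset.card_univ, Fintype.card_fin, smul_eq_mul] at hb
      obtain ⟨m, rfl⟩ : ∃ m, n = m + 1 := ⟨n - 1, by omega⟩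
      simp only [Nat.add_sub_cancel] at hb
      have : (m+1) * (m*m) < (m+1)^3 := by nlinarith
      omega
  | succ k ih =>
    intro τ hk
    by_cases hinv : ∃ p : Fin n × Fin n, p.1 < p.2 ∧ τ p.2 < τ p.1
    · obtain ⟨⟨i, j⟩, hij, hτ⟩ := hinv
      dsimp only at hij hτ
      have hijne : i ≠ j := ne_of_lt hij
      set τ' : Equiv.Perm (Fin n) := (Equiv.swap i j).trans τ with hτ'def
      have hτ'i : τ' i = τ j := by simp [hτ'def]
      have hτ'j : τ' j = τ i := by simp [hτ'def]
      have hτ'k : ∀ x : Fin n, x ≠ i → x ≠ j → τ' x = τ x := by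
        intro x hxi hxj
        simp [hτ'def, Equiv.swap_apply_of_ne_of_ne hxi hxj]
      -- measure strictly increases
      have hm : (∑ x, (τ x : ℕ) * (x : ℕ)) < ∑ x, (τ' x : ℕ) * (x : ℕ) := by
        rw [pair_split hijne (fun x => (τ x : ℕ) * x),
            pair_split hijne (fun x => (τ' x : ℕ) * x)]
        have hrest : ∑ x ∈ (Finset.univ.erase i).erase j, (τ x : ℕ) * x
            = ∑ x ∈ (Finset.univ.erase i).erase j, (τ' x : ℕ) * x := by
          apply Finset.sum_congr rfl
          intro x hx
          rw [Finset.mem_erase, Finset.mem_erase] at hx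
          rw [hτ'k x hx.2.1 hx.1]
        rw [← hrest]
        have := nat_ineq (Fin.lt_iff_val_lt_val.1 hτ) (Fin.lt_iff_val_lt_val.1 hij)
        rw [hτ'i, hτ'j]
        omega
      have hIH := ih τ' (by omega)
      refine hIH.trans ?_
      rw [pair_split hijne (fun x => g (Y (τ' x) - Z x)),
          pair_split hijne (fun x => g (Y (τ x) - Z x))]
      have hrest : ∑ x ∈ (Finset.univ.erase i).erase j, g (Y (τ' x) - Z x)
          = ∑ x ∈ (Finset.univ.erase i).erase j, g (Y (τ x) - Z x) := by
        apply Finset.sum_congr rfl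
        intro x hx
        rw [Finset.mem_erase, Finset.mem_erase] at hx
        rw [hτ'k x hx.2.1 hx.1]
      rw [hrest]
      have hpair := convex_swap hg (hY (le_of_lt hτ)) (hZ (le_of_lt hij))
      rw [hτ'i, hτ'j]
      linarith
    · -- no inversion: τ is the identity
      push_neg at hinv
      have hmono : Monotone τ := by
        intro a b hab
        rcases eq_or_lt_of_le hab with h | h
        · rw [h]
        · exact hinv (a, b) h
      have hsm : StrictMono (⇑τ) := hmono.strictMono_of_injective τ.injective
      have hid : ∀ x, τ x = x := by
        let e : Fin n ≃o Fin n := ⟨τ, fun {a b} => hsm.le_iff_le⟩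
        exact fun x => Fin.ext (Fin.coe_orderIso_apply e x)
      simp [hid]

theorem sum_convex_sorted_sub_le {n : ℕ} (Z X : Fin n → ℝ) (hZ : Monotone Z)
    (α : Equiv.Perm (Fin n)) (hα : Monotone (X ∘ α)) (σ : Equiv.Perm (Fin n))
    (g : ℝ → ℝ) (hg : ConvexOn ℝ Set.univ g) :
    ∑ i, g (X (α i) - Z i) ≤ ∑ i, g (X (σ i) - Z i) := by
  have := mono_case Z (X ∘ α) hZ hα g hg (n^3) (σ.trans α.symm) (Nat.le_add_left _ _)
  simpa using this
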